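/- arXiv:1806.00038 — 4 statements merged into one kernel-verified Lean document; each statement's English description precedes it below -/
import Mathlib

section
/- Let H be a Hilbert space and (x_λ)_{λ∈Λ} a net of contractions in B(H). Let M ⊆ H be a closed subspace invariant under each x_λ, such that the orthogonal complement M^⊥ is contained in ker(x_λ*) for every λ. If the net (x_λ P_M) converges to P_M in the weak operator topology, then (x_λ) converges to P_M in the weak operator topology, where P_M denotes the orthogonal projection onto M. -/
open Filter ContinuousLinearMap

/-- Let `(x i)` be a net of contractions on a Hilbert space `H`, `M` a closed subspace
invariant under each `x i` with `Mᗮ ⊆ ker (x i)*` for every `i`. If `x i ∘ P_M → P_M` in the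
weak operator topology, then `x i → P_M` in the weak operator topology, where
`P_M = M.subtypeL ∘L orthogonalProjection M` is the orthogonal projection onto `M`. -/
theorem net_tendsto_projection_wot {H : Type*} [NormedAddCommGroup H] [InnerProductSpace ℂ H]
    [CompleteSpace H] {Λ : Type*} (l : Filter Λ) [l.NeBot]
    (x : Λ → H →L[ℂ] H) (hcontr : ∀ i, ‖x i‖ ≤ 1)
    (M : Submodule ℂ H) (hM : IsClosed (M : Set H)) [M.HasOrthogonalProjection]
    (hinv : ∀ i, ∀ m ∈ M, x i m ∈ M)
    (hker : ∀ i, ∀ v ∈ Mᗮ, ContinuousLinearMap.adjoint (x i) v = 0)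
    (hconv : ∀ ξ η : H,
      Tendsto (fun i => (inner ℂ (x i ((M.subtypeL ∘L M.orthogonalProjectionOnto) ξ)) η : ℂ)) l
        (nhds (inner ℂ ((M.subtypeL ∘L M.orthogonalProjectionOnto) ξ) η))) :
    ∀ ξ η : H,
      Tendsto (fun i => (inner ℂ (x i ξ) η : ℂ)) l
        (nhds (inner ℂ ((M.subtypeL ∘L M.orthogonalProjectionOnto) ξ) η)) := by
  intro ξ η
  set P : H →L[ℂ] H := M.subtypeL ∘L M.orthogonalProjectionOnto with hP
  have hPmem : ∀ z : H, P z ∈ M := fun z => (M.orthogonalProjectionOnto z).2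
  have hPperp : ∀ z : H, z - P z ∈ Mᗮ := fun z =>
    M.sub_starProjection_mem_orthogonal z
  -- the Mᗮ part of ξ
  set v : H := ξ - P ξ with hv
  have hvperp : v ∈ Mᗮ := hPperp ξ
  -- second term tends to 0
  have hzero : Tendsto (fun i => (inner ℂ (x i v) η : ℂ)) l (nhds 0) := by
    by_cases hPη : P η = 0
    · -- then x i * η = 0, each term is 0
      have h0 : ∀ i, (inner ℂ (x i v) η : ℂ) = 0 := by
        intro i
        have : ContinuousLinearMap.adjoint (x i) η = 0 := by
          have := hker i (η - P η) (hPperp η)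
          rwa [hPη, sub_zero] at this
        rw [← ContinuousLinearMap.adjoint_inner_right (x i) v η, this, inner_zero_right]
      simpa [h0] using tendsto_const_nhds (α := ℂ) (x := 0)
    · -- main case
      set w : Λ → H := fun i => ContinuousLinearMap.adjoint (x i) (P η) with hw
      have hterm : ∀ i, (inner ℂ (x i v) η : ℂ) = inner ℂ v (w i - P (w i)) := by
        intro i
        have h1 : (inner ℂ (x i v) η : ℂ) = inner ℂ v (ContinuousLinearMap.adjoint (x i) η) :=
          (ContinuousLinearMap.adjoint_inner_right (x i) v η).symm
        have h2 : ContinuousLinearMap.adjoint (x i) η = w i := by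
          have h3 := hker i (η - P η) (hPperp η)
          have := map_sub (ContinuousLinearMap.adjoint (x i)) η (P η)
          rw [h3] at this
          rw [hw]
          simpa [sub_eq_zero] using this.symm
        have h4 : (inner ℂ v (P (w i)) : ℂ) = 0 := by
          rw [← inner_conj_symm, hvperp (P (w i)) (hPmem (w i)), map_zero]
        rw [h1, h2, inner_sub_right, h4, sub_zero]
      -- the quantity from hconv
      set c : Λ → ℂ := fun i => inner ℂ (x i (P η)) (P η) with hc
      have hcconv : Tendsto c l (nhds (inner ℂ (P η) (P η) : ℂ)) := by
        have := hconv η (P η)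
        have hPP : P (P η) = P η := by
          rw [hP]
          simp only [ContinuousLinearMap.coe_comp', Function.comp_apply,
            Submodule.coe_subtypeL', Submodule.coe_subtype]
          rw [Submodule.orthogonalProjectionOnto_mem_subspace_eq_self]
        simpa [hPP] using this
      -- norm bounds
      have hwle : ∀ i, ‖w i‖ ≤ ‖P η‖ := by
        intro i
        calc ‖w i‖ ≤ ‖ContinuousLinearMap.adjoint (x i)‖ * ‖P η‖ := le_opNorm _ _
          _ ≤ 1 * ‖P η‖ := by
              apply mul_le_mul_of_nonneg_right _ (norm_nonneg _)
              rw [LinearIsometryEquiv.norm_map]; exact hcontr i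
          _ = ‖P η‖ := one_mul _
      have hPwge : ∀ i, ‖c i‖ ≤ ‖P η‖ * ‖P (w i)‖ := by
        intro i
        have h5 : (inner ℂ (P η) (w i) : ℂ) = c i := by
          rw [hw, hc, ContinuousLinearMap.adjoint_inner_right]
        have h6 : (inner ℂ (P η) (w i) : ℂ) = inner ℂ (P η) (P (w i)) := by
          have h8 : (inner ℂ (P η) (w i - P (w i)) : ℂ) = 0 :=
            hPperp (w i) (P η) (hPmem η)
          rw [inner_sub_right] at h8
          linear_combination h8
        rw [← h5, h6]
        exact norm_inner_le_norm _ _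
      -- Pythagoras
      have hpyth : ∀ i, ‖w i‖ ^ 2 = ‖P (w i)‖ ^ 2 + ‖w i - P (w i)‖ ^ 2 := by
        intro i
        have h9 : (inner ℂ (P (w i)) (w i - P (w i)) : ℂ) = 0 :=
          hPperp (w i) (P (w i)) (hPmem (w i))
        have h10 := norm_add_sq_eq_norm_sq_add_norm_sq_of_inner_eq_zero _ _ h9
        rw [show P (w i) + (w i - P (w i)) = w i by abel] at h10
        simpa [pow_two] using h10
      -- the squeeze bound
      have hbound : ∀ i, ‖(inner ℂ (x i v) η : ℂ)‖ ≤
          ‖v‖ * Real.sqrt (‖P η‖ ^ 2 - (‖P η‖⁻¹) ^ 2 * ‖c i‖ ^ 2) := by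
        intro i
        rw [hterm i]
        calc ‖(inner ℂ v (w i - P (w i)) : ℂ)‖ ≤ ‖v‖ * ‖w i - P (w i)‖ :=
              norm_inner_le_norm _ _
          _ ≤ ‖v‖ * Real.sqrt (‖P η‖ ^ 2 - (‖P η‖⁻¹) ^ 2 * ‖c i‖ ^ 2) := by
              apply mul_le_mul_of_nonneg_left _ (norm_nonneg v)
              rw [show ‖w i - P (w i)‖ = Real.sqrt (‖w i - P (w i)‖ ^ 2) by
                rw [Real.sqrt_sq (norm_nonneg _)]]
              apply Real.sqrt_le_sqrt
              have hA : ‖w i - P (w i)‖ ^ 2 = ‖w i‖ ^ 2 - ‖P (w i)‖ ^ 2 := by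
                have := hpyth i; linarith
              rw [hA]
              have hB : ‖w i‖ ^ 2 ≤ ‖P η‖ ^ 2 :=
                pow_le_pow_left₀ (norm_nonneg _) (hwle i) 2
              have hC : (‖P η‖⁻¹) ^ 2 * ‖c i‖ ^ 2 ≤ ‖P (w i)‖ ^ 2 := by
                have hPηpos : (0:ℝ) < ‖P η‖ := norm_pos_iff.mpr hPη
                have := hPwge i
                have h10 : ‖c i‖ ^ 2 ≤ (‖P η‖ * ‖P (w i)‖) ^ 2 :=
                  pow_le_pow_left₀ (norm_nonneg _) this 2
                rw [mul_pow] at h10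
                calc (‖P η‖⁻¹) ^ 2 * ‖c i‖ ^ 2
                    ≤ (‖P η‖⁻¹) ^ 2 * (‖P η‖ ^ 2 * ‖P (w i)‖ ^ 2) := by
                      apply mul_le_mul_of_nonneg_left h10 (by positivity)
                  _ = ‖P (w i)‖ ^ 2 := by
                      field_simp
              linarith
      -- the bound tends to 0
      have hgconv : Tendsto
          (fun i => ‖v‖ * Real.sqrt (‖P η‖ ^ 2 - (‖P η‖⁻¹) ^ 2 * ‖c i‖ ^ 2)) l (nhds 0) := by
        have hnc : Tendsto (fun i => ‖c i‖) l (nhds ‖(inner ℂ (P η) (P η) : ℂ)‖) :=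
          hcconv.norm
        have hval : ‖(inner ℂ (P η) (P η) : ℂ)‖ = ‖P η‖ ^ 2 := by
          rw [inner_self_eq_norm_sq_to_K]
          simp [pow_two]
        rw [hval] at hnc
        have hinner : Tendsto (fun i => ‖P η‖ ^ 2 - (‖P η‖⁻¹) ^ 2 * ‖c i‖ ^ 2) l
            (nhds 0) := by
          have h11 : Tendsto (fun i => ‖P η‖ ^ 2 - (‖P η‖⁻¹) ^ 2 * ‖c i‖ ^ 2) l
              (nhds (‖P η‖ ^ 2 - (‖P η‖⁻¹) ^ 2 * (‖P η‖ ^ 2) ^ 2)) :=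
            tendsto_const_nhds.sub (tendsto_const_nhds.mul (hnc.pow 2))
          have hPηpos : (0:ℝ) < ‖P η‖ := norm_pos_iff.mpr hPη
          have h12 : ‖P η‖ ^ 2 - (‖P η‖⁻¹) ^ 2 * (‖P η‖ ^ 2) ^ 2 = 0 := by
            field_simp
            ring
          rwa [h12] at h11
        have hsqrt : Tendsto
            (fun i => Real.sqrt (‖P η‖ ^ 2 - (‖P η‖⁻¹) ^ 2 * ‖c i‖ ^ 2)) l (nhds 0) := by
          have := (Real.continuous_sqrt.tendsto 0).comp hinner
          rw [Real.sqrt_zero] at this; exact this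
        simpa using tendsto_const_nhds.mul hsqrt
      -- squeeze
      rw [tendsto_zero_iff_norm_tendsto_zero]
      exact squeeze_zero (fun i => norm_nonneg _) hbound hgconv
  -- combine
  have hmain := (hconv ξ η).add hzero
  rw [add_zero] at hmain
  convert hmain using 2 with i
  rw [hv]
  rw [show x i ξ = x i (P ξ) + x i (ξ - P ξ) by rw [← map_add]; congr 1; abel]
  rw [inner_add_left]
end

section
/- Let x ∈ B(H) be a contraction and M ⊆ H a closed subspace with orthogonal projection P. If P x P = P and (I - P) x = 0, then x = P. -/
open ContinuousLinearMap

/-- Let `x` be a contraction on a Hilbert space `H` and `M` a closed subspace with orthogonal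
projection `P` (characterized by `P v = v` on `M` and `P v = 0` on `Mᗮ`).
If `P x P = P` and `(1 - P) x = 0`, then `x = P`. -/
theorem contraction_eq_projection {H : Type*} [NormedAddCommGroup H] [InnerProductSpace ℂ H]
    [CompleteSpace H] (M : Submodule ℂ H) (hM : IsClosed (M : Set H))
    (P x : H →L[ℂ] H) (hx : ‖x‖ ≤ 1)
    (hP1 : ∀ v ∈ M, P v = v) (hP2 : ∀ v ∈ Mᗮ, P v = 0)
    (h1 : P ∘L x ∘L P = P) (h2 : (1 - P) ∘L x = 0) :
    x = P := by
  haveI : CompleteSpace M := hM.completeSpace_coe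
  -- x = P ∘ x
  have hPx : ∀ v, P (x v) = x v := by
    intro v
    have := congrFun (congrArg DFunLike.coe h2) v
    simp only [comp_apply, sub_apply, one_apply, zero_apply] at this
    exact (sub_eq_zero.mp this).symm
  -- P maps into M
  have hPmem : ∀ v, P v ∈ M := by
    intro v
    obtain ⟨m, hm, m', hm', rfl⟩ := M.exists_add_mem_mem_orthogonal v
    rw [map_add, hP1 m hm, hP2 m' hm']
    simpa using hm
  -- x fixes M
  have hfix : ∀ u ∈ M, x u = u := by
    intro u hu
    have := congrFun (congrArg DFunLike.coe h1) u
    simp only [comp_apply] at this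
    rw [hP1 u hu, hPx u] at this
    exact this
  -- x kills Mᗮ
  have hkill : ∀ w ∈ Mᗮ, x w = 0 := by
    intro w hw
    set u : H := x w with hu
    have humem : u ∈ M := by rw [hu, ← hPx w]; exact hPmem _
    -- for every t > 0, (2t+1)‖u‖² ≤ ‖w‖²
    have key : ∀ t : ℝ, 0 ≤ t → (2 * t + 1) * ‖u‖ ^ 2 ≤ ‖w‖ ^ 2 := by
      intro t ht
      have horth : (inner ℂ ((t : ℂ) • u) w : ℂ) = 0 := by
        rw [inner_smul_left]
        rw [Submodule.mem_orthogonal] at hw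
        rw [hw u humem, mul_zero]
      have hpyth : ‖(t : ℂ) • u + w‖ ^ 2 = ‖(t : ℂ) • u‖ ^ 2 + ‖w‖ ^ 2 := by
        rw [pow_two, pow_two, pow_two]
        exact norm_add_sq_eq_norm_sq_add_norm_sq_of_inner_eq_zero _ _ horth
      have hxv : x ((t : ℂ) • u + w) = ((t : ℂ) + 1) • u := by
        rw [map_add, map_smul, hfix u humem, ← hu, add_smul, one_smul]
      have hcontr : ‖x ((t : ℂ) • u + w)‖ ≤ ‖(t : ℂ) • u + w‖ := by
        calc ‖x ((t : ℂ) • u + w)‖ ≤ ‖x‖ * ‖(t : ℂ) • u + w‖ := x.le_opNorm _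
        _ ≤ 1 * ‖(t : ℂ) • u + w‖ := by
              exact mul_le_mul_of_nonneg_right hx (norm_nonneg _)
        _ = ‖(t : ℂ) • u + w‖ := one_mul _
      rw [hxv] at hcontr
      have hsq : ‖((t : ℂ) + 1) • u‖ ^ 2 ≤ ‖(t : ℂ) • u + w‖ ^ 2 := by
        apply pow_le_pow_left₀ (norm_nonneg _) hcontr
      rw [hpyth, norm_smul, norm_smul] at hsq
      have h1n : ‖(t : ℂ) + 1‖ = t + 1 := by
        rw [show ((t : ℂ) + 1) = ((t + 1 : ℝ) : ℂ) by push_cast; ring,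
          Complex.norm_real, Real.norm_of_nonneg (by linarith)]
      have h2n : ‖(t : ℂ)‖ = t := by
        rw [Complex.norm_real, Real.norm_of_nonneg ht]
      rw [h1n, h2n] at hsq
      nlinarith [norm_nonneg u, norm_nonneg w, hsq]
    -- conclude u = 0
    have hu0 : u = 0 := by
      by_contra hne
      have hupos : 0 < ‖u‖ ^ 2 := pow_pos (norm_pos_iff.mpr hne) 2
      have := key (‖w‖ ^ 2 / ‖u‖ ^ 2) (div_nonneg (sq_nonneg _) (sq_nonneg _))
      have hc : ‖w‖ ^ 2 / ‖u‖ ^ 2 * ‖u‖ ^ 2 = ‖w‖ ^ 2 :=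
        div_mul_cancel₀ _ (ne_of_gt hupos)
      nlinarith [norm_nonneg w]
    exact hu0
  -- conclude
  ext v
  obtain ⟨m, hm, m', hm', rfl⟩ := M.exists_add_mem_mem_orthogonal v
  simp only [map_add]
  rw [hfix m hm, hkill m' hm', hP1 m hm, hP2 m' hm']
end

section
/- Let C_0, C_k be d×d complex matrices with C_k invertible. Then ‖[[C_0, (1/2)C_k], [0, C_0]]‖ < ‖[[C_0, C_k], [0, C_0]]‖, where ‖·‖ is the operator norm on 2d×2d matrices. -/
open Matrix

noncomputable section

namespace HalvedAux

/-- Apply `toEuclideanCLM` of a matrix to an explicit vector. -/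
lemma clm_apply {n : Type*} [Fintype n] [DecidableEq n] (A : Matrix n n ℂ)
    (x : n → ℂ) :
    (Matrix.toEuclideanCLM (𝕜 := ℂ) A) ((WithLp.equiv 2 (n → ℂ)).symm x) =
      (WithLp.equiv 2 (n → ℂ)).symm (A *ᵥ x) := by
  exact Matrix.toEuclideanCLM_toLp (𝕜 := ℂ) A x

lemma sq_norm {n : Type*} [Fintype n] (x : EuclideanSpace ℂ n) :
    ‖x‖ ^ 2 = ∑ i, ‖x i‖ ^ 2 := by
  rw [EuclideanSpace.norm_eq, Real.sq_sqrt]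
  positivity

end HalvedAux

end

set_option maxHeartbeats 1000000 in
set_option synthInstance.maxHeartbeats 400000 in
/-- If `C₀, C_k` are `d×d` complex matrices with `C_k` invertible (`d ≥ 1`), then
`‖[[C₀, C_k/2], [0, C₀]]‖ < ‖[[C₀, C_k], [0, C₀]]‖` in the operator norm on `2d×2d` matrices. -/
theorem halved_block_norm_lt {d : ℕ} (hd : 0 < d) (C0 Ck : Matrix (Fin d) (Fin d) ℂ)
    (hCk : IsUnit Ck) :
    ‖Matrix.toEuclideanCLM (𝕜 := ℂ) (Matrix.fromBlocks C0 ((1 / 2 : ℂ) • Ck) 0 C0)‖ <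
      ‖Matrix.toEuclideanCLM (𝕜 := ℂ) (Matrix.fromBlocks C0 Ck 0 C0)‖ := by
  classical
  set φ := Matrix.toEuclideanCLM (𝕜 := ℂ) (n := Fin d ⊕ Fin d) with hφ
  set A := Matrix.fromBlocks C0 Ck 0 C0 with hA
  set B := Matrix.fromBlocks C0 (0 : Matrix (Fin d) (Fin d) ℂ) 0 C0 with hB
  have hsplit : Matrix.fromBlocks C0 ((1 / 2 : ℂ) • Ck) 0 C0
      = (1 / 2 : ℂ) • A + (1 / 2 : ℂ) • B := by
    ext i j
    rcases i with i | i <;> rcases j with j | j <;>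
      simp [hA, hB, Matrix.fromBlocks] <;> ring
  set T0 := Matrix.toEuclideanCLM (𝕜 := ℂ) (n := Fin d) C0 with hT0
  set Tk := Matrix.toEuclideanCLM (𝕜 := ℂ) (n := Fin d) Ck with hTk
  set N0 := ‖T0‖ with hN0
  set M := ‖φ A‖ with hM
  have hTkUnit : IsUnit Tk := hCk.map (Matrix.toEuclideanCLM (𝕜 := ℂ) (n := Fin d))
  obtain ⟨u, hu⟩ := hTkUnit
  set S : EuclideanSpace ℂ (Fin d) →L[ℂ] EuclideanSpace ℂ (Fin d) := (u⁻¹).val with hS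
  have key : ∀ x : EuclideanSpace ℂ (Fin d), ‖x‖ ≤ ‖S‖ * ‖Tk x‖ := by
    intro x
    have hinv : S (Tk x) = x := by
      rw [hS, ← hu, ← ContinuousLinearMap.comp_apply, ← ContinuousLinearMap.mul_def,
        u.inv_mul, ContinuousLinearMap.one_apply]
    calc ‖x‖ = ‖S (Tk x)‖ := by rw [hinv]
    _ ≤ ‖S‖ * ‖Tk x‖ := ContinuousLinearMap.le_opNorm _ _
  haveI : Nonempty (Fin d) := ⟨⟨0, hd⟩⟩
  haveI : Nontrivial (EuclideanSpace ℂ (Fin d)) := by infer_instance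
  have hSpos : (0 : ℝ) < ‖S‖ := by
    rw [norm_pos_iff]
    intro h0
    obtain ⟨x, hx⟩ := exists_ne (0 : EuclideanSpace ℂ (Fin d))
    have hk := key x
    rw [h0] at hk
    simp only [norm_zero, zero_mul] at hk
    exact hx (norm_le_zero_iff.mp hk)
  set c := ‖S‖⁻¹ with hc
  have hcpos : 0 < c := inv_pos.mpr hSpos
  have hTk_lb : ∀ x : EuclideanSpace ℂ (Fin d), c * ‖x‖ ≤ ‖Tk x‖ := by
    intro x
    rw [hc, inv_mul_le_iff₀ hSpos]
    exact key x
  -- main quantitative bound on A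
  have hAx : ∀ x : EuclideanSpace ℂ (Fin d),
      ‖Tk x‖ ^ 2 + ‖T0 x‖ ^ 2 ≤ M ^ 2 * ‖x‖ ^ 2 := by
    intro x
    set x' : Fin d → ℂ := WithLp.equiv 2 (Fin d → ℂ) x with hx'
    set v : EuclideanSpace ℂ (Fin d ⊕ Fin d) :=
      (WithLp.equiv 2 (Fin d ⊕ Fin d → ℂ)).symm (Sum.elim 0 x') with hv
    have hvnorm : ‖v‖ ^ 2 = ‖x‖ ^ 2 := by
      rw [HalvedAux.sq_norm, HalvedAux.sq_norm, Fintype.sum_sum_type]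
      simp [hv, hx', WithLp.equiv_symm_apply, PiLp.toLp_apply]
    have happ : φ A v = (WithLp.equiv 2 (Fin d ⊕ Fin d → ℂ)).symm
        (Sum.elim (Ck *ᵥ x') (C0 *ᵥ x')) := by
      rw [hv, hφ, HalvedAux.clm_apply]
      congr 1
      rw [hA, Matrix.fromBlocks_mulVec]
      ext (i | i) <;> simp
    have h1 : Tk x = (WithLp.equiv 2 (Fin d → ℂ)).symm (Ck *ᵥ x') := by
      rw [hTk, ← HalvedAux.clm_apply]; congr 1
    have h2 : T0 x = (WithLp.equiv 2 (Fin d → ℂ)).symm (C0 *ᵥ x') := by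
      rw [hT0, ← HalvedAux.clm_apply]; congr 1
    have hAv : ‖φ A v‖ ^ 2 = ‖Tk x‖ ^ 2 + ‖T0 x‖ ^ 2 := by
      rw [happ, HalvedAux.sq_norm, Fintype.sum_sum_type, h1, h2,
        HalvedAux.sq_norm, HalvedAux.sq_norm]
      simp [WithLp.equiv_symm_apply, PiLp.toLp_apply]
    have hle := ContinuousLinearMap.le_opNorm (φ A) v
    calc ‖Tk x‖ ^ 2 + ‖T0 x‖ ^ 2 = ‖φ A v‖ ^ 2 := hAv.symm
    _ ≤ (M * ‖v‖) ^ 2 := by nlinarith [norm_nonneg (φ A v), norm_nonneg v, norm_nonneg (φ A)]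
    _ = M ^ 2 * ‖x‖ ^ 2 := by rw [mul_pow, hvnorm]
  -- c² ≤ M²
  have hcM : c ^ 2 ≤ M ^ 2 := by
    obtain ⟨x, hx⟩ := exists_ne (0 : EuclideanSpace ℂ (Fin d))
    have hxpos : 0 < ‖x‖ := norm_pos_iff.mpr hx
    have h1 := hAx x
    have h2 := hTk_lb x
    have h2sq := mul_le_mul h2 h2 (by positivity) (norm_nonneg _)
    nlinarith [mul_pos hxpos hxpos, sq_nonneg (‖T0 x‖)]
  have hMnn : 0 ≤ M := norm_nonneg _
  have hMpos : 0 < M := by nlinarith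
  -- N0 < M
  have hN0ltM : N0 < M := by
    have hN0le : N0 ≤ Real.sqrt (M ^ 2 - c ^ 2) := by
      apply ContinuousLinearMap.opNorm_le_bound _ (Real.sqrt_nonneg _)
      intro x
      have h1 := hAx x
      have h2 := hTk_lb x
      have h3 : ‖T0 x‖ ^ 2 ≤ (Real.sqrt (M ^ 2 - c ^ 2) * ‖x‖) ^ 2 := by
        rw [mul_pow, Real.sq_sqrt (by nlinarith)]
        nlinarith [norm_nonneg (Tk x), norm_nonneg x, mul_nonneg hcpos.le (norm_nonneg x)]
      calc ‖T0 x‖ = Real.sqrt (‖T0 x‖ ^ 2) := (Real.sqrt_sq (norm_nonneg _)).symm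
      _ ≤ Real.sqrt ((Real.sqrt (M ^ 2 - c ^ 2) * ‖x‖) ^ 2) := Real.sqrt_le_sqrt h3
      _ = Real.sqrt (M ^ 2 - c ^ 2) * ‖x‖ := Real.sqrt_sq (by positivity)
    have hlt : Real.sqrt (M ^ 2 - c ^ 2) < Real.sqrt (M ^ 2) :=
      Real.sqrt_lt_sqrt (by nlinarith) (by nlinarith)
    rw [Real.sqrt_sq hMpos.le] at hlt
    exact lt_of_le_of_lt hN0le hlt
  -- ‖φ B‖ ≤ N0
  have hBle : ‖φ B‖ ≤ N0 := by
    apply ContinuousLinearMap.opNorm_le_bound _ (norm_nonneg _)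
    intro v
    set v' : Fin d ⊕ Fin d → ℂ := WithLp.equiv 2 (Fin d ⊕ Fin d → ℂ) v with hv'
    set vl : EuclideanSpace ℂ (Fin d) := (WithLp.equiv 2 (Fin d → ℂ)).symm (v' ∘ Sum.inl) with hvl
    set vr : EuclideanSpace ℂ (Fin d) := (WithLp.equiv 2 (Fin d → ℂ)).symm (v' ∘ Sum.inr) with hvr
    have happ : φ B v = (WithLp.equiv 2 (Fin d ⊕ Fin d → ℂ)).symm
        (Sum.elim (C0 *ᵥ (v' ∘ Sum.inl)) (C0 *ᵥ (v' ∘ Sum.inr))) := by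
      rw [show v = (WithLp.equiv 2 (Fin d ⊕ Fin d → ℂ)).symm v' from rfl, hφ,
        HalvedAux.clm_apply]
      congr 1
      rw [hB, Matrix.fromBlocks_mulVec]
      ext (i | i) <;> simp
    have h1 : T0 vl = (WithLp.equiv 2 (Fin d → ℂ)).symm (C0 *ᵥ (v' ∘ Sum.inl)) := by
      rw [hT0, hvl, HalvedAux.clm_apply]
    have h2 : T0 vr = (WithLp.equiv 2 (Fin d → ℂ)).symm (C0 *ᵥ (v' ∘ Sum.inr)) := by
      rw [hT0, hvr, HalvedAux.clm_apply]
    have hBv : ‖φ B v‖ ^ 2 = ‖T0 vl‖ ^ 2 + ‖T0 vr‖ ^ 2 := by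
      rw [happ, HalvedAux.sq_norm, Fintype.sum_sum_type, h1, h2,
        HalvedAux.sq_norm, HalvedAux.sq_norm]
      simp [WithLp.equiv_symm_apply, PiLp.toLp_apply]
    have hvnorm : ‖v‖ ^ 2 = ‖vl‖ ^ 2 + ‖vr‖ ^ 2 := by
      rw [HalvedAux.sq_norm, HalvedAux.sq_norm, HalvedAux.sq_norm, Fintype.sum_sum_type]
      simp [hvl, hvr, hv', WithLp.equiv_symm_apply, PiLp.toLp_apply]
    have hl := ContinuousLinearMap.le_opNorm T0 vl
    have hr := ContinuousLinearMap.le_opNorm T0 vr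
    rw [← hN0] at hl hr
    have hl2 := mul_le_mul hl hl (norm_nonneg _) (mul_nonneg (hN0 ▸ norm_nonneg T0) (norm_nonneg _))
    have hr2 := mul_le_mul hr hr (norm_nonneg _) (mul_nonneg (hN0 ▸ norm_nonneg T0) (norm_nonneg _))
    have hsq : ‖φ B v‖ ^ 2 ≤ (N0 * ‖v‖) ^ 2 := by
      rw [hBv]
      have hvn2 : N0 ^ 2 * ‖v‖ ^ 2 = N0 ^ 2 * ‖vl‖ ^ 2 + N0 ^ 2 * ‖vr‖ ^ 2 := by
        rw [hvnorm]; ring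
      nlinarith [hl2, hr2, hvn2]
    have hnn : (0:ℝ) ≤ N0 * ‖v‖ := mul_nonneg (hN0 ▸ norm_nonneg T0) (norm_nonneg v)
    nlinarith [norm_nonneg (φ B v)]
  -- conclude
  have htri : ‖φ (Matrix.fromBlocks C0 ((1 / 2 : ℂ) • Ck) 0 C0)‖
      ≤ (1 / 2) * M + (1 / 2) * ‖φ B‖ := by
    rw [hsplit, map_add, _root_.map_smul, _root_.map_smul]
    calc ‖(1 / 2 : ℂ) • φ A + (1 / 2 : ℂ) • φ B‖
        ≤ ‖(1 / 2 : ℂ) • φ A‖ + ‖(1 / 2 : ℂ) • φ B‖ := norm_add_le _ _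
    _ = (1 / 2) * M + (1 / 2) * ‖φ B‖ := by
        rw [norm_smul (1/2:ℂ) (φ A), norm_smul (1/2:ℂ) (φ B)]
        norm_num
        exact hM.symm
  calc ‖φ (Matrix.fromBlocks C0 ((1 / 2 : ℂ) • Ck) 0 C0)‖
      ≤ (1 / 2) * M + (1 / 2) * ‖φ B‖ := htri
  _ ≤ (1 / 2) * M + (1 / 2) * N0 := by linarith
  _ < M := by linarith
end

section
/- Let H be an infinite-dimensional separable Hilbert space and let A ⊆ B(H ⊕ H ⊕ H) be the algebra of all strictly upper-triangular 3×3 operator matrices [[0, r, s], [0, 0, t], [0, 0, 0]] with r, s, t ∈ B(H). Suppose θ : A → B(F) is a contractive (in particular bounded) algebra homomorphism with F a Hilbert space, and suppose θ is nonzero on the matrix with s = I and r = t = 0. Then F is infinite-dimensional. -/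
open ContinuousLinearMap

open scoped InnerProductSpace in
/-- An infinite-dimensional separable complex Hilbert space admits a sequence of isometries
with pairwise orthogonal ranges; equivalently `Vₙ* ∘ V_k = δ_{nk}`. -/
theorem exists_orthogonal_isometries' {H : Type*}
    [NormedAddCommGroup H] [InnerProductSpace ℂ H] [CompleteSpace H]
    [TopologicalSpace.SeparableSpace H] (hinf : ¬ FiniteDimensional ℂ H) :
    ∃ V : ℕ → (H →L[ℂ] H),
      ∀ n k, (ContinuousLinearMap.adjoint (V n)) ∘L (V k) = if n = k then 1 else 0 := by
  obtain ⟨w, b, hb⟩ := exists_hilbertBasis ℂ H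
  have hw_count : Countable w := by
    refine Pairwise.countable_of_isOpen_disjoint (s := fun x : w => Metric.ball (x : H) (1/2))
      ?_ (fun i => Metric.isOpen_ball) (fun i => Metric.nonempty_ball.2 (by norm_num))
    intro i j hij
    have hipair : ⟪(i : H), (j : H)⟫_ℂ = 0 := by
      have := b.orthonormal.2 (i := i) (j := j) hij
      rwa [hb] at this
    have hni : ‖(i : H)‖ = 1 := by
      have := b.orthonormal.1 i; rwa [hb] at this
    have hnj : ‖(j : H)‖ = 1 := by
      have := b.orthonormal.1 j; rwa [hb] at this
    have hsq : ‖(i : H) - (j : H)‖ ^ 2 = 2 := by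
      rw [norm_sub_sq (𝕜 := ℂ), hipair, hni, hnj]
      norm_num
    have hdist : (1 : ℝ) < dist (i : H) (j : H) := by
      rw [dist_eq_norm]
      nlinarith [norm_nonneg ((i : H) - (j : H))]
    simp only [Function.onFun]
    rw [Set.disjoint_left]
    intro z hzi hzj
    simp only [Metric.mem_ball] at hzi hzj
    have := dist_triangle (i : H) z (j : H)
    rw [dist_comm (i : H) z] at this
    linarith
  have hw_inf : Infinite w := by
    rw [Set.infinite_coe_iff]
    intro hfin
    apply hinf
    have h1 : Set.range ⇑b = w := by rw [hb]; exact Subtype.range_coe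
    have h2 := b.dense_span
    rw [h1] at h2
    haveI : FiniteDimensional ℂ (Submodule.span ℂ w) := FiniteDimensional.span_of_finite ℂ hfin
    have h3 : (Submodule.span ℂ w).topologicalClosure = Submodule.span ℂ w :=
      IsClosed.submodule_topologicalClosure_eq (Submodule.closed_of_finiteDimensional _)
    rw [h3] at h2
    have : FiniteDimensional ℂ (⊤ : Submodule ℂ H) := h2 ▸ inferInstance
    exact FiniteDimensional.of_injective (Submodule.topEquiv (R := ℂ) (M := H)).symm.toLinearMap
      (Submodule.topEquiv.symm.injective)
  obtain ⟨e⟩ : Nonempty (ℕ × ℕ ≃ w) := nonempty_equiv_of_countable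
  set v : ℕ × ℕ → H := fun p => b (e p) with hv
  have hv_on : Orthonormal ℂ v := b.orthonormal.comp _ e.injective
  have hv_total : ⊤ ≤ (Submodule.span ℂ (Set.range v)).topologicalClosure := by
    have hr : Set.range v = Set.range ⇑b := by
      have hcomp : v = ⇑b ∘ ⇑e := rfl
      rw [hcomp, Set.range_comp, e.surjective.range_eq, Set.image_univ]
    rw [hr, b.dense_span]
  have hsum := hv_on.isHilbertSum hv_total
  set R : H ≃ₗᵢ[ℂ] lp (fun _ : ℕ × ℕ => ℂ) 2 := hsum.linearIsometryEquiv with hR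
  have hrowinj : ∀ n : ℕ, Function.Injective
      (fun p : ℕ × ℕ => ((n, Nat.pairEquiv p) : ℕ × ℕ)) := by
    intro n p q h
    exact Nat.pairEquiv.injective (congrArg Prod.snd h)
  have rown : ∀ n : ℕ, Orthonormal ℂ (fun p : ℕ × ℕ => v (n, Nat.pairEquiv p)) :=
    fun n => hv_on.comp _ (hrowinj n)
  set W : ℕ → (lp (fun _ : ℕ × ℕ => ℂ) 2 →ₗᵢ[ℂ] H) :=
    fun n => ((rown n).orthogonalFamily).linearIsometry with hW
  set U : ℕ → (H →ₗᵢ[ℂ] H) := fun n => (W n).comp R.toLinearIsometry with hU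
  have hWsum : ∀ (n : ℕ) (f : lp (fun _ : ℕ × ℕ => ℂ) 2),
      HasSum (fun p => f p • v (n, Nat.pairEquiv p)) (W n f) := by
    intro n f
    have := ((rown n).orthogonalFamily).hasSum_linearIsometry f
    simpa [LinearIsometry.toSpanSingleton_apply, hW] using this
  have horth : ∀ n k, n ≠ k → ∀ x y : H, ⟪U n x, U k y⟫_ℂ = 0 := by
    intro n k hnk x y
    have claim1 : ∀ q : ℕ × ℕ, ⟪U n x, v (k, Nat.pairEquiv q)⟫_ℂ = 0 := by
      intro q
      have h1 : HasSum (fun p => ⟪v (k, Nat.pairEquiv q), (R x) p • v (n, Nat.pairEquiv p)⟫_ℂ)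
          ⟪v (k, Nat.pairEquiv q), U n x⟫_ℂ := by
        exact (innerSL ℂ (v (k, Nat.pairEquiv q))).hasSum (hWsum n (R x))
      have h2 : (fun p => ⟪v (k, Nat.pairEquiv q), (R x) p • v (n, Nat.pairEquiv p)⟫_ℂ)
          = fun _ => 0 := by
        funext p
        rw [inner_smul_right, hv_on.2 (by simp [hnk.symm] : ((k, Nat.pairEquiv q) : ℕ × ℕ) ≠ (n, Nat.pairEquiv p)), mul_zero]
      rw [h2] at h1
      have h3 : ⟪v (k, Nat.pairEquiv q), U n x⟫_ℂ = 0 := h1.unique hasSum_zero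
      rw [← inner_conj_symm, h3, map_zero]
    have h4 : HasSum (fun q => ⟪U n x, (R y) q • v (k, Nat.pairEquiv q)⟫_ℂ)
        ⟪U n x, U k y⟫_ℂ := (innerSL ℂ (U n x)).hasSum (hWsum k (R y))
    have h5 : (fun q => ⟪U n x, (R y) q • v (k, Nat.pairEquiv q)⟫_ℂ) = fun _ => 0 := by
      funext q
      rw [inner_smul_right, claim1, mul_zero]
    rw [h5] at h4
    exact h4.unique hasSum_zero
  refine ⟨fun n => (U n).toContinuousLinearMap, ?_⟩
  intro n k
  split_ifs with h
  · subst h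
    rw [← ContinuousLinearMap.inner_map_map_iff_adjoint_comp_self]
    intro x y
    exact (U n).inner_map_map x y
  · ext x
    refine ext_inner_right ℂ fun y => ?_
    rw [ContinuousLinearMap.comp_apply, ContinuousLinearMap.adjoint_inner_left]
    simpa using horth k n (fun hh => h hh.symm) x y

/-- The `i`-th coordinate projection of the Hilbert space direct sum `H ⊕ H ⊕ H`. -/
noncomputable def proj3 {H : Type*} [NormedAddCommGroup H] [InnerProductSpace ℂ H]
    (i : Fin 3) : (PiLp 2 fun _ : Fin 3 => H) →L[ℂ] H :=
  (ContinuousLinearMap.proj i) ∘L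
    (PiLp.continuousLinearEquiv 2 ℂ (fun _ : Fin 3 => H)).toContinuousLinearMap

/-- The strictly upper-triangular `3×3` operator matrix `[[0, r, s], [0, 0, t], [0, 0, 0]]`
acting on the Hilbert space direct sum `H ⊕ H ⊕ H`. -/
noncomputable def upperTri3 {H : Type*} [NormedAddCommGroup H] [InnerProductSpace ℂ H]
    (r s t : H →L[ℂ] H) :
    (PiLp 2 fun _ : Fin 3 => H) →L[ℂ] (PiLp 2 fun _ : Fin 3 => H) :=
  (PiLp.continuousLinearEquiv 2 ℂ (fun _ : Fin 3 => H)).symm.toContinuousLinearMap ∘L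
    (ContinuousLinearMap.pi ![r ∘L proj3 1 + s ∘L proj3 2, t ∘L proj3 2, 0])

/-- Let `H` be an infinite-dimensional separable Hilbert space and let `A` be the algebra of
strictly upper-triangular `3×3` operator matrices `[[0, r, s], [0, 0, t], [0, 0, 0]]` with
`r, s, t ∈ B(H)`, acting on `H ⊕ H ⊕ H`. If `θ : A → B(F)` (presented as a linear map in the
entries `(r, s, t)`) is a contractive multiplicative homomorphism which is nonzero on the
matrix with `s = I`, `r = t = 0`, then `F` is infinite-dimensional. -/
theorem upper_triangular_rep_infinite_dimensional {H F : Type*}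
    [NormedAddCommGroup H] [InnerProductSpace ℂ H] [CompleteSpace H]
    [TopologicalSpace.SeparableSpace H] (hinf : ¬ FiniteDimensional ℂ H)
    [NormedAddCommGroup F] [InnerProductSpace ℂ F] [CompleteSpace F]
    (θ : ((H →L[ℂ] H) × (H →L[ℂ] H) × (H →L[ℂ] H)) →ₗ[ℂ] (F →L[ℂ] F))
    (hmul : ∀ r s t r' s' t' : H →L[ℂ] H,
      θ (r, s, t) * θ (r', s', t') = θ (0, r * t', 0))
    (hcontr : ∀ r s t : H →L[ℂ] H, ‖θ (r, s, t)‖ ≤ ‖upperTri3 r s t‖)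
    (hnz : θ (0, 1, 0) ≠ 0) :
    ¬ FiniteDimensional ℂ F := by
  intro hF
  obtain ⟨V, hV⟩ := exists_orthogonal_isometries' hinf
  set a : ℕ → (F →L[ℂ] F) := fun n => θ (ContinuousLinearMap.adjoint (V n), 0, 0) with ha
  have key : ∀ n k, a n * θ (0, 0, V k) = if n = k then θ (0, 1, 0) else 0 := by
    intro n k
    rw [ha]
    simp only
    rw [hmul]
    have hmulc : ContinuousLinearMap.adjoint (V n) * V k
        = if n = k then 1 else 0 := hV n k
    rw [hmulc]
    split_ifs with h
    · rfl
    · have : ((0 : H →L[ℂ] H), (0 : H →L[ℂ] H), (0 : H →L[ℂ] H))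
        = (0 : (H →L[ℂ] H) × (H →L[ℂ] H) × (H →L[ℂ] H)) := rfl
      rw [this, map_zero]
  have hli : LinearIndependent ℂ a := by
    rw [linearIndependent_iff']
    intro s g hsum i hi
    have h1 := congrArg (· * θ (0, 0, V i)) hsum
    simp only [Finset.sum_mul, smul_mul_assoc, zero_mul, key] at h1
    have h2 : (∑ x ∈ s, g x • if x = i then θ (0, 1, 0) else 0)
        = g i • θ (0, 1, 0) := by
      rw [Finset.sum_eq_single i]
      · simp
      · intro j hj hji; simp [hji]
      · intro habs; exact absurd hi habs
    rw [h2] at h1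
    rcases smul_eq_zero.mp h1 with h | h
    · exact h
    · exact absurd h hnz
  exact absurd hli.finite (by intro hfin; exact not_finite ℕ)
end
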